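/- Let f ∈ L¹(ℝ, ℂ) be Fourier-smooth with exponent p ∈ [-1, ∞), and define g : ℝ^d → ℂ by g(x) = Π_{j=1}^d f(x_j). Then g is Fourier-smooth with exponent p - (d-1). -/

import Mathlib

open MeasureTheory Filter

/-- The Fourier transform `f̂(k) = ∫ e^{-ikx} f(x) dx` of a function on `ℝ`. -/
noncomputable def ft1 (f : ℝ → ℂ) (k : ℝ) : ℂ :=
  ∫ x : ℝ, Complex.exp (-(Complex.I * (k : ℂ) * (x : ℂ))) * f x

/-- The Fourier transform `f̂(k) = ∫ e^{-i⟨k,x⟩} f(x) dx` of a function on `ℝ^d`. -/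
noncomputable def ftd {d : ℕ} (f : EuclideanSpace ℝ (Fin d) → ℂ)
    (k : EuclideanSpace ℝ (Fin d)) : ℂ :=
  ∫ x, Complex.exp (-(Complex.I * ((inner ℝ k x : ℝ) : ℂ))) * f x

/-- `f ∈ L¹(ℝ, ℂ)` is Fourier-smooth with exponent `p ∈ [-1, ∞)`:
(i) `|f̂(k)| ≤ c (1+|k|)^{-(1+p)/2}`, and (ii) if `p ≤ 0`, additionally
`∫_{|k|≥2} sup_{|s|<1} |f̂(r(k+s))|² dk = O(r^{-(1+p)})` as `r → ∞`. -/
def FourierSmooth1 (f : ℝ → ℂ) (p : ℝ) : Prop :=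
  Integrable f ∧
  (∃ c > (0 : ℝ), ∀ k : ℝ, ‖ft1 f k‖ ≤ c * (1 + |k|) ^ (-((1 + p) / 2))) ∧
  (p ≤ 0 → ∃ C > (0 : ℝ), ∀ᶠ r : ℝ in atTop,
    (∫ k in {k : ℝ | 2 ≤ |k|},
        ⨆ s ∈ Metric.ball (0 : ℝ) 1, ‖ft1 f (r * (k + s))‖ ^ 2) ≤ C * r ^ (-(1 + p)))

/-- `f ∈ L¹(ℝ^d, ℂ)` is Fourier-smooth with exponent `p ∈ [-d, ∞)`:
(i) `|f̂(k)| ≤ c (1+‖k‖)^{-(d+p)/2}`, and (ii) if `p ≤ 0`, additionally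
`∫_{‖k‖≥2} sup_{‖s‖<1} |f̂(r(k+s))|² dk = O(r^{-(d+p)})` as `r → ∞`. -/
def FourierSmoothD {d : ℕ} (f : EuclideanSpace ℝ (Fin d) → ℂ) (p : ℝ) : Prop :=
  Integrable f ∧
  (∃ c > (0 : ℝ), ∀ k, ‖ftd f k‖ ≤ c * (1 + ‖k‖) ^ (-(((d : ℝ) + p) / 2))) ∧
  (p ≤ 0 → ∃ C > (0 : ℝ), ∀ᶠ r : ℝ in atTop,
    (∫ k in {k : EuclideanSpace ℝ (Fin d) | 2 ≤ ‖k‖},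
        ⨆ s ∈ Metric.ball (0 : EuclideanSpace ℝ (Fin d)) 1,
          ‖ftd f (r • (k + s))‖ ^ 2) ≤ C * r ^ (-((d : ℝ) + p)))

section Aux
open Metric Set

section SupHelpers
variable {X : Type*} {S : Set X} {F : X → ℝ} {B : ℝ}

lemma biSup_le' (hB : 0 ≤ B) (h : ∀ s ∈ S, F s ≤ B) : (⨆ s ∈ S, F s) ≤ B :=
  Real.iSup_le (fun s => Real.iSup_le (fun hs => h s hs) hB) hB

lemma biSup_nonneg' (h : ∀ s ∈ S, 0 ≤ F s) : 0 ≤ ⨆ s ∈ S, F s := by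
  refine Real.iSup_nonneg fun s => Real.iSup_nonneg fun hs => h s hs

lemma le_biSup' (hB : 0 ≤ B) (h : ∀ s ∈ S, F s ≤ B) {s₀ : X} (hs₀ : s₀ ∈ S) :
    F s₀ ≤ ⨆ s ∈ S, F s := by
  have h1 : F s₀ ≤ ⨆ _ : s₀ ∈ S, F s₀ := by
    refine le_ciSup (f := fun _ : s₀ ∈ S => F s₀) ?_ hs₀
    exact ⟨F s₀, by rintro x ⟨_, rfl⟩; exact le_rfl⟩
  refine h1.trans (le_ciSup (f := fun s => ⨆ _ : s ∈ S, F s) ?_ s₀)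
  refine ⟨max B 0, ?_⟩
  rintro x ⟨s, rfl⟩
  exact Real.iSup_le (fun hs => (h s hs).trans (le_max_left _ _)) (le_max_right _ _)

end SupHelpers


lemma norm_kernel (k x : ℝ) : ‖Complex.exp (-(Complex.I * (k : ℂ) * (x : ℂ)))‖ = 1 := by
  have : -(Complex.I * (k : ℂ) * (x : ℂ)) = ((-(k*x) : ℝ) : ℂ) * Complex.I := by
    push_cast; ring
  rw [this, Complex.norm_exp_ofReal_mul_I]

lemma ft1_le (f : ℝ → ℂ) (k : ℝ) : ‖ft1 f k‖ ≤ ∫ x, ‖f x‖ := by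
  refine (norm_integral_le_integral_norm _).trans ?_
  refine le_of_eq (integral_congr_ae (Filter.Eventually.of_forall fun x => ?_))
  simp only [norm_mul, norm_kernel, one_mul]

lemma kernel_continuous (x : ℝ) :
    Continuous fun k : ℝ => Complex.exp (-(Complex.I * (k : ℂ) * (x : ℂ))) := by fun_prop

lemma ft1_continuous {f : ℝ → ℂ} (hf : Integrable f) : Continuous (ft1 f) := by
  apply continuous_of_dominated (bound := fun x => ‖f x‖)
  · intro k
    have : Continuous fun x : ℝ => Complex.exp (-(Complex.I * (k : ℂ) * (x : ℂ))) := by fun_prop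
    exact this.aestronglyMeasurable.mul hf.aestronglyMeasurable
  · intro k
    filter_upwards with x
    simp only [norm_mul, norm_kernel, one_mul, le_refl]
  · exact hf.norm
  · filter_upwards with x
    exact (kernel_continuous x).mul continuous_const


section
variable {φ : ℝ → ℝ}

/-- sup of a continuous bounded nonneg function over the unit ball via rationals -/
lemma biSup_ball_eq_rat (hφ : Continuous φ) {B : ℝ} (hB : 0 ≤ B) (hb : ∀ t, φ t ≤ B)
    (h0 : ∀ t, 0 ≤ φ t) (k : ℝ) :
    (⨆ s ∈ Metric.ball (0:ℝ) 1, φ (k + s)) =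
      ⨆ q : ℚ, (if |(q:ℝ)| < 1 then φ (k + (q:ℝ)) else 0) := by
  have hbdd : BddAbove (Set.range fun q : ℚ => if |(q:ℝ)| < 1 then φ (k + (q:ℝ)) else 0) := by
    refine ⟨B, ?_⟩
    rintro x ⟨q, rfl⟩
    dsimp only
    split <;> simp [hb, hB]
  refine le_antisymm ?_ ?_
  · refine Real.iSup_le (fun s => Real.iSup_le (fun hs => ?_) ?_) ?_
    · -- φ (k+s) ≤ rat sup
      rw [mem_ball_zero_iff, Real.norm_eq_abs] at hs
      refine le_of_forall_pos_le_add fun ε hε => ?_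
      have hc : ContinuousAt (fun t => φ (k + t)) s := (hφ.comp (by fun_prop)).continuousAt
      rcases Metric.continuousAt_iff.mp hc ε hε with ⟨δ, hδ, hδ'⟩
      obtain ⟨q, hq1, hq2⟩ := exists_rat_btwn (show max (s - δ/2) (-1) < min (s + δ/2) 1 by
        rcases abs_lt.mp hs with ⟨h1, h2⟩
        simp only [max_lt_iff, lt_min_iff]
        constructor <;> constructor <;> linarith)
      rw [max_lt_iff] at hq1; rw [lt_min_iff] at hq2
      have hqb : |(q:ℝ)| < 1 := abs_lt.mpr ⟨hq1.2, hq2.2⟩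
      have hqd : dist (q:ℝ) s < δ := by
        rw [Real.dist_eq, abs_lt]; constructor <;> linarith [hq1.1, hq2.1]
      have := hδ' hqd
      rw [Real.dist_eq] at this
      have h3 : φ (k + s) ≤ φ (k + (q:ℝ)) + ε := by
        rcases abs_lt.mp this with ⟨hl, _⟩; linarith
      refine h3.trans (add_le_add ?_ le_rfl)
      refine (le_ciSup hbdd q).trans_eq' ?_
      simp [hqb]
    · exact Real.iSup_nonneg fun q => by split; exacts [h0 _, le_rfl]
    · exact Real.iSup_nonneg fun q => by split; exacts [h0 _, le_rfl]
  · refine Real.iSup_le (fun q => ?_) ?_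
    · split
      · rename_i hq
        refine le_biSup' (F := fun s => φ (k + s)) (B := B) hB (fun s _ => hb _) ?_
        rwa [mem_ball_zero_iff, Real.norm_eq_abs]
      · exact biSup_nonneg' fun s _ => h0 _
    · exact biSup_nonneg' fun s _ => h0 _
end

section Hstar
variable {f : ℝ → ℂ} (hf : Integrable f)

noncomputable def hstar (f : ℝ → ℂ) (r k : ℝ) : ℝ :=
  ⨆ s ∈ Metric.ball (0:ℝ) 1, ‖ft1 f (r * (k + s))‖ ^ 2

lemma sq_norm_ft1_le (t : ℝ) : ‖ft1 f t‖ ^ 2 ≤ (∫ x, ‖f x‖) ^ 2 := by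
  have h1 := ft1_le f t
  have h2 : (0:ℝ) ≤ ‖ft1 f t‖ := norm_nonneg _
  nlinarith

lemma M_nonneg : (0:ℝ) ≤ ∫ x, ‖f x‖ := integral_nonneg fun x => norm_nonneg _

lemma Msq_nonneg : (0:ℝ) ≤ (∫ x, ‖f x‖) ^ 2 := sq_nonneg _

lemma hstar_nonneg (r k : ℝ) : 0 ≤ hstar f r k := by
  unfold hstar
  exact biSup_nonneg' (F := fun s => ‖ft1 f (r * (k + s))‖ ^ 2) fun s _ => sq_nonneg _

lemma hstar_le_Msq (r k : ℝ) : hstar f r k ≤ (∫ x, ‖f x‖) ^ 2 := by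
  unfold hstar
  exact biSup_le' (F := fun s => ‖ft1 f (r * (k + s))‖ ^ 2) Msq_nonneg fun s _ => sq_norm_ft1_le _

lemma le_hstar {s : ℝ} (hs : |s| < 1) (r k : ℝ) : ‖ft1 f (r * (k + s))‖ ^ 2 ≤ hstar f r k := by
  unfold hstar
  exact le_biSup' (F := fun s => ‖ft1 f (r * (k + s))‖ ^ 2) Msq_nonneg
    (fun s _ => sq_norm_ft1_le _) (by rwa [mem_ball_zero_iff, Real.norm_eq_abs])

lemma hstar_measurable (hf : Integrable f) (r : ℝ) : Measurable (hstar f r) := by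
  have hφ : Continuous fun t : ℝ => ‖ft1 f (r * t)‖ ^ 2 := by
    have := ft1_continuous hf
    fun_prop
  have : hstar f r = fun k =>
      ⨆ q : ℚ, (if |(q:ℝ)| < 1 then ‖ft1 f (r * (k + (q:ℝ)))‖ ^ 2 else 0) := by
    funext k
    unfold hstar
    exact biSup_ball_eq_rat hφ Msq_nonneg (fun t => sq_norm_ft1_le _) (fun t => sq_nonneg _) k
  rw [this]
  refine Measurable.iSup fun q => ?_
  split
  · have : Continuous fun k : ℝ => ‖ft1 f (r * (k + (q:ℝ)))‖ ^ 2 := by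
      have := ft1_continuous hf; fun_prop
    exact this.measurable
  · exact measurable_const

end Hstar

section Tail

lemma tail_eq : {k : ℝ | 2 ≤ |k|} = Iic (-2) ∪ Ici 2 := by
  ext k
  simp only [mem_setOf_eq, mem_union, mem_Iic, mem_Ici, le_abs]
  constructor
  · rintro (h | h); · right; exact h
    · left; linarith
  · rintro (h | h); · right; linarith
    · left; exact h

lemma tail_measurableSet : MeasurableSet {k : ℝ | 2 ≤ |k|} := by
  rw [tail_eq]; exact measurableSet_Iic.union measurableSet_Ici

lemma integrableOn_tail_of_abs {G : ℝ → ℝ} (h : IntegrableOn (fun t => G |t|) (Ici 2)) :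
    IntegrableOn (fun t => G |t|) {k : ℝ | 2 ≤ |k|} := by
  rw [tail_eq]
  refine IntegrableOn.union ?_ h
  have m : MeasurableEmbedding fun x : ℝ => -x := (Homeomorph.neg ℝ).measurableEmbedding
  rw [IntegrableOn, ← Measure.map_neg_eq_self (volume : Measure ℝ),
    m.restrict_map, m.integrable_map_iff]
  have : ((fun t => G |t|) ∘ fun x : ℝ => -x) = fun t => G |t| := by
    funext t; simp [abs_neg]
  rw [this]
  have : (fun x : ℝ => -x) ⁻¹' Iic (-2) = Ici 2 := by
    ext x; simp only [mem_preimage, mem_Iic, mem_Ici]; constructor <;> intro <;> linarith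
  rwa [this]

lemma setIntegral_tail_of_abs {G : ℝ → ℝ} (h : IntegrableOn (fun t => G |t|) {k : ℝ | 2 ≤ |k|}) :
    ∫ k in {k : ℝ | 2 ≤ |k|}, G |k| = 2 * ∫ k in Ici (2:ℝ), G |k| := by
  rw [tail_eq] at h ⊢
  have h1 : IntegrableOn (fun t => G |t|) (Iic (-2:ℝ)) := h.mono_set subset_union_left
  have h2 : IntegrableOn (fun t => G |t|) (Ici (2:ℝ)) := h.mono_set subset_union_right
  rw [setIntegral_union ?_ measurableSet_Ici h1 h2]
  · have : ∫ k in Iic (-2:ℝ), G |k| = ∫ k in Ioi (2:ℝ), G |k| := by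
      have := integral_comp_neg_Iic (-2 : ℝ) (fun t => G |t|)
      simp only [abs_neg, neg_neg] at this
      exact this
    rw [this, ← integral_Ici_eq_integral_Ioi, two_mul]
  · exact Iic_disjoint_Ici.mpr (by norm_num)

end Tail

section Decay
variable {f : ℝ → ℂ} {c p : ℝ}

lemma sq_decay (hd : ∀ k, ‖ft1 f k‖ ≤ c * (1+|k|) ^ (-((1+p)/2))) (hc : 0 ≤ c) (t : ℝ) :
    ‖ft1 f t‖ ^ 2 ≤ c ^ 2 * (1+|t|) ^ (-(1+p)) := by
  have h1 : ‖ft1 f t‖ ^ 2 ≤ (c * (1+|t|) ^ (-((1+p)/2))) ^ 2 := by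
    have := hd t
    have h0 : (0:ℝ) ≤ ‖ft1 f t‖ := norm_nonneg _
    nlinarith
  refine h1.trans_eq ?_
  rw [mul_pow]
  congr 1
  rw [← Real.rpow_natCast ((1+|t|) ^ (-((1+p)/2))) 2, ← Real.rpow_mul (by positivity)]
  norm_num

lemma hstar_decay (hd : ∀ k, ‖ft1 f k‖ ≤ c * (1+|k|) ^ (-((1+p)/2))) (hc : 0 ≤ c)
    (hp : -1 ≤ p) {r k : ℝ} (hr : 0 ≤ r) (hk : 2 ≤ |k|) :
    hstar f r k ≤ c ^ 2 * (1 + r * |k| / 2) ^ (-(1+p)) := by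
  have hbase : (0:ℝ) < 1 + r * |k| / 2 := by positivity
  unfold hstar
  refine biSup_le' (F := fun s => ‖ft1 f (r * (k + s))‖ ^ 2) (by positivity) ?_
  intro s hs
  rw [mem_ball_zero_iff, Real.norm_eq_abs] at hs
  have h1 : |k| / 2 ≤ |k + s| := by
    have := abs_sub_abs_le_abs_sub (k + s) s
    simp only [add_sub_cancel_right] at this
    have h2 : |k| - |s| ≤ |k + s| := by
      have := abs_add_le (k + s) (-s)
      simp only [add_neg_cancel_right, abs_neg] at this
      linarith
    linarith
  have h2 : 1 + r * |k| / 2 ≤ 1 + |r * (k + s)| := by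
    rw [abs_mul, abs_of_nonneg hr]
    have : r * (|k| / 2) ≤ r * |k + s| := mul_le_mul_of_nonneg_left h1 hr
    linarith
  refine (sq_decay hd hc _).trans ?_
  refine mul_le_mul_of_nonneg_left ?_ (by positivity)
  exact Real.rpow_le_rpow_of_nonpos hbase h2 (by linarith)

lemma tail_bound_pos (hf : Integrable f)
    (hd : ∀ k, ‖ft1 f k‖ ≤ c * (1+|k|) ^ (-((1+p)/2))) (hc : 0 ≤ c) (hp : 0 < p) :
    ∃ C > 0, ∀ r : ℝ, 1 ≤ r → IntegrableOn (hstar f r) {k : ℝ | 2 ≤ |k|} ∧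
      (∫ k in {k : ℝ | 2 ≤ |k|}, hstar f r k) ≤ C * r ^ (-(1+p)) := by
  set q : ℝ := 1 + p with hq
  have hq1 : 1 < q := by simp [hq]; linarith
  have hq0 : 0 < q := by linarith
  set J : ℝ := ∫ k in Ici (2:ℝ), k ^ (-q) with hJdef
  have hJint : IntegrableOn (fun k : ℝ => k ^ (-q)) (Ici 2) := by
    rw [integrableOn_Ici_iff_integrableOn_Ioi]
    exact integrableOn_Ioi_rpow_of_lt (by linarith) (by norm_num)
  have hJ0 : 0 ≤ J := by
    refine setIntegral_nonneg measurableSet_Ici fun x hx => ?_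
    have : (0:ℝ) < x := lt_of_lt_of_le (by norm_num) hx
    positivity
  refine ⟨2 * (c^2 * (2:ℝ)^q) * J + 1, by positivity, fun r hr => ?_⟩
  have hr0 : (0:ℝ) < r := by linarith
  -- majorant G |t|
  set G : ℝ → ℝ := fun t => c^2 * (2:ℝ)^q * r^(-q) * t ^ (-q) with hG
  have hGabs : ∀ k : ℝ, 2 ≤ |k| → hstar f r k ≤ G |k| := by
    intro k hk
    refine (hstar_decay hd hc (by linarith) hr0.le hk).trans ?_
    rw [hG]
    have hbase : (0:ℝ) < r * |k| / 2 := by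
      have : (0:ℝ) < |k| := by linarith
      positivity
    have h1 : (1 + r * |k| / 2 : ℝ) ^ (-q) ≤ (r * |k| / 2) ^ (-q) :=
      Real.rpow_le_rpow_of_nonpos hbase (by linarith) (by linarith)
    have h2 : (r * |k| / 2 : ℝ) ^ (-q) = (2:ℝ)^q * r^(-q) * |k| ^ (-q) := by
      have e1 : ((2:ℝ)⁻¹) ^ (-q) = (2:ℝ) ^ q := by
        rw [Real.inv_rpow (by norm_num), ← Real.rpow_neg (by norm_num), neg_neg]
      rw [div_eq_mul_inv, Real.mul_rpow (mul_nonneg hr0.le (abs_nonneg k)) (by positivity),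
        Real.mul_rpow hr0.le (abs_nonneg k), e1]
      ring
    calc c^2 * (1 + r * |k| / 2) ^ (-q) ≤ c^2 * (r * |k| / 2) ^ (-q) :=
          mul_le_mul_of_nonneg_left h1 (by positivity)
      _ = c ^ 2 * (2:ℝ)^q * r^(-q) * |k| ^ (-q) := by rw [h2]; ring
  have hGint : IntegrableOn (fun t => G |t|) {k : ℝ | 2 ≤ |k|} := by
    refine integrableOn_tail_of_abs ?_
    have : IntegrableOn (fun t : ℝ => G t) (Ici 2) := by
      rw [hG]
      exact (hJint.const_mul _)
    refine this.congr_fun (fun t ht => ?_) measurableSet_Ici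
    rw [abs_of_nonneg (le_trans (by norm_num) ht)]
  have hint : IntegrableOn (hstar f r) {k : ℝ | 2 ≤ |k|} := by
    refine Integrable.mono' hGint ((hstar_measurable hf r).aestronglyMeasurable) ?_
    rw [ae_restrict_iff' tail_measurableSet]
    filter_upwards with k hk
    rw [Real.norm_eq_abs, abs_of_nonneg (hstar_nonneg _ _)]
    exact hGabs k hk
  refine ⟨hint, ?_⟩
  have step1 : (∫ k in {k : ℝ | 2 ≤ |k|}, hstar f r k) ≤ ∫ k in {k : ℝ | 2 ≤ |k|}, G |k| := by
    refine setIntegral_mono_on hint hGint tail_measurableSet fun k hk => hGabs k hk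
  refine step1.trans ?_
  rw [setIntegral_tail_of_abs hGint]
  have : ∫ k in Ici (2:ℝ), G |k| = c^2 * (2:ℝ)^q * r^(-q) * J := by
    rw [hJdef, ← integral_const_mul]
    refine setIntegral_congr_fun measurableSet_Ici fun t ht => ?_
    rw [hG, abs_of_nonneg (le_trans (by norm_num) ht)]
  rw [this]
  have : 2 * (c ^ 2 * (2:ℝ) ^ q * r ^ (-q) * J) = (2 * (c^2 * (2:ℝ)^q) * J) * r ^ (-q) := by ring
  rw [this]
  have hrq : (0:ℝ) ≤ r ^ (-q) := Real.rpow_nonneg hr0.le _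
  nlinarith [mul_nonneg (mul_nonneg (by positivity : (0:ℝ) ≤ 2 * (c^2 * (2:ℝ)^q)) hJ0) hrq]

end Decay

section Euclid
variable {d : ℕ}

lemma abs_coord_le (κ : EuclideanSpace ℝ (Fin d)) (i : Fin d) : |κ i| ≤ ‖κ‖ := by
  rw [EuclideanSpace.norm_eq]
  rw [show |κ i| = Real.sqrt (|κ i| ^ 2) by rw [Real.sqrt_sq_eq_abs, abs_abs]]
  apply Real.sqrt_le_sqrt
  refine Finset.single_le_sum (f := fun j => ‖κ j‖ ^ 2) (fun j _ => by positivity) (Finset.mem_univ i) |>.trans_eq' ?_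
  simp [Real.norm_eq_abs]

lemma exists_coord_big (hd : 0 < d) (κ : EuclideanSpace ℝ (Fin d)) :
    ∃ j : Fin d, ‖κ‖ ≤ Real.sqrt d * |κ j| := by
  have : Nonempty (Fin d) := ⟨⟨0, hd⟩⟩
  obtain ⟨j, -, hj⟩ := Finset.exists_max_image Finset.univ (fun i => |κ i|) ⟨⟨0, hd⟩, Finset.mem_univ _⟩
  refine ⟨j, ?_⟩
  rw [EuclideanSpace.norm_eq]
  have h1 : ∑ i, ‖κ i‖ ^ 2 ≤ (d : ℝ) * |κ j| ^ 2 := by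
    calc ∑ i, ‖κ i‖ ^ 2 ≤ ∑ _i : Fin d, |κ j| ^ 2 := by
          refine Finset.sum_le_sum fun i _ => ?_
          rw [Real.norm_eq_abs]
          have := hj i (Finset.mem_univ i)
          nlinarith [abs_nonneg (κ i), abs_nonneg (κ j)]
      _ = (d : ℝ) * |κ j| ^ 2 := by simp [mul_comm]
  refine (Real.sqrt_le_sqrt h1).trans ?_
  rw [Real.sqrt_mul (by positivity), Real.sqrt_sq_eq_abs, abs_abs]

end Euclid

section Transfer
variable {d : ℕ} {f : ℝ → ℂ}

lemma integrable_g (hf : Integrable f) {g : EuclideanSpace ℝ (Fin d) → ℂ}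
    (hg : ∀ x, g x = ∏ j : Fin d, f (x j)) : Integrable g := by
  have e := MeasurePreserving.symm _ (EuclideanSpace.volume_preserving_symm_measurableEquiv_toLp (Fin d))
  rw [← e.integrable_comp_emb (MeasurableEquiv.measurableEmbedding _)]
  have : (g ∘ (MeasurableEquiv.toLp 2 (Fin d → ℝ)).symm.symm) =
      fun y : Fin d → ℝ => ∏ j : Fin d, f (y j) := by
    funext y
    simp only [Function.comp_apply, hg]
    congr 1
  rw [this]
  exact Integrable.fintype_prod (f := fun _ : Fin d => f) (fun _ => hf)

lemma ftd_eq_prod (hf : Integrable f) {g : EuclideanSpace ℝ (Fin d) → ℂ}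
    (hg : ∀ x, g x = ∏ j : Fin d, f (x j)) (κ : EuclideanSpace ℝ (Fin d)) :
    ftd g κ = ∏ i : Fin d, ft1 f (κ i) := by
  unfold ftd
  rw [← (MeasurePreserving.symm _
      (EuclideanSpace.volume_preserving_symm_measurableEquiv_toLp (Fin d))).integral_comp
    (MeasurableEquiv.measurableEmbedding _) _]
  have step : ∀ y : Fin d → ℝ,
      Complex.exp (-(Complex.I *
          ((inner ℝ κ ((MeasurableEquiv.toLp 2 (Fin d → ℝ)).symm.symm y) : ℝ) : ℂ))) *
        g ((MeasurableEquiv.toLp 2 (Fin d → ℝ)).symm.symm y) =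
      ∏ i : Fin d, (Complex.exp (-(Complex.I * (κ i : ℂ) * (y i : ℂ))) * f (y i)) := by
    intro y
    have hcoord : ∀ i, ((MeasurableEquiv.toLp 2 (Fin d → ℝ)).symm.symm y) i = y i := by
      intro i; rfl
    have hinner : (inner ℝ κ ((MeasurableEquiv.toLp 2 (Fin d → ℝ)).symm.symm y) : ℝ) =
        ∑ i, κ i * y i := by
      simp only [PiLp.inner_apply, RCLike.inner_apply, conj_trivial, hcoord]
      exact Finset.sum_congr rfl fun i _ => mul_comm _ _
    rw [hinner, hg]
    simp only [hcoord]
    rw [Finset.prod_mul_distrib, ← Complex.exp_sum]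
    congr 2
    push_cast
    rw [Finset.mul_sum, ← Finset.sum_neg_distrib]
    exact Finset.sum_congr rfl fun i _ => by ring
  simp only [step]
  rw [integral_fintype_prod_volume_eq_prod
    (f := fun i (t : ℝ) => Complex.exp (-(Complex.I * (κ i : ℂ) * (t : ℂ))) * f t)]
  rfl

end Transfer

section PartOne
variable {d : ℕ} {f : ℝ → ℂ} {c p : ℝ}

lemma sqrt_d_pos (hd : 0 < d) : (0:ℝ) < Real.sqrt d := by
  refine Real.sqrt_pos.mpr ?_
  exact_mod_cast hd

lemma one_le_sqrt_d (hd : 0 < d) : (1:ℝ) ≤ Real.sqrt d := by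
  rw [show (1:ℝ) = Real.sqrt 1 by simp]
  apply Real.sqrt_le_sqrt
  exact_mod_cast hd

lemma part_one (hd : 0 < d) (hdec : ∀ k, ‖ft1 f k‖ ≤ c * (1+|k|) ^ (-((1+p)/2)))
    (hc : 0 < c) (hp : -1 ≤ p) {g : EuclideanSpace ℝ (Fin d) → ℂ}
    (hprod : ∀ κ, ftd g κ = ∏ i : Fin d, ft1 f (κ i)) (κ : EuclideanSpace ℝ (Fin d)) :
    ‖ftd g κ‖ ≤ (c ^ d * Real.sqrt d ^ ((1+p)/2)) * (1 + ‖κ‖) ^ (-((1+p)/2)) := by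
  set e : ℝ := (1+p)/2 with he
  have he0 : 0 ≤ e := by rw [he]; linarith
  obtain ⟨j, hj⟩ := exists_coord_big hd κ
  have hsd := sqrt_d_pos hd
  have hnorm0 : (0:ℝ) ≤ ‖κ‖ := norm_nonneg _
  have hb1 : (0:ℝ) < 1 + ‖κ‖ / Real.sqrt d := by positivity
  have step1 : ‖ftd g κ‖ ≤ ∏ i : Fin d,
      (if i = j then c * (1 + ‖κ‖ / Real.sqrt d) ^ (-e) else c) := by
    rw [hprod, norm_prod]
    refine Finset.prod_le_prod (fun i _ => norm_nonneg _) fun i _ => ?_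
    by_cases hij : i = j
    · subst hij
      simp only [if_pos rfl]
      refine (hdec (κ i)).trans ?_
      refine mul_le_mul_of_nonneg_left ?_ hc.le
      refine Real.rpow_le_rpow_of_nonpos hb1 ?_ (by linarith)
      have : ‖κ‖ / Real.sqrt d ≤ |κ i| := (div_le_iff₀ hsd).mpr (by linarith [hj])
      linarith
    · simp only [if_neg hij]
      refine (hdec (κ i)).trans ?_
      nth_rewrite 2 [show c = c * 1 by ring]
      refine mul_le_mul_of_nonneg_left ?_ hc.le
      refine Real.rpow_le_one_of_one_le_of_nonpos ?_ (by linarith)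
      linarith [abs_nonneg (κ i)]
  have step2 : ∏ i : Fin d, (if i = j then c * (1 + ‖κ‖ / Real.sqrt d) ^ (-e) else c)
      = c ^ d * (1 + ‖κ‖ / Real.sqrt d) ^ (-e) := by
    rw [← Finset.mul_prod_erase Finset.univ _ (Finset.mem_univ j)]
    rw [if_pos rfl]
    rw [Finset.prod_congr rfl (fun i hi => if_neg (Finset.ne_of_mem_erase hi)),
      Finset.prod_const, Finset.card_erase_of_mem (Finset.mem_univ j), Finset.card_univ,
      Fintype.card_fin]
    have hd1 : 1 ≤ d := hd
    have : c ^ (d - 1) * c = c ^ d := by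
      rw [← pow_succ, Nat.sub_add_cancel hd1]
    nlinarith [Real.rpow_nonneg hb1.le (-e), pow_nonneg hc.le (d-1), this]
  have step3 : (1 + ‖κ‖ / Real.sqrt d) ^ (-e) ≤ Real.sqrt d ^ e * (1 + ‖κ‖) ^ (-e) := by
    have hble : (1 + ‖κ‖) / Real.sqrt d ≤ 1 + ‖κ‖ / Real.sqrt d := by
      rw [add_div]
      have h1 : (1:ℝ) / Real.sqrt d ≤ 1 := by
        rw [div_le_one hsd]; exact one_le_sqrt_d hd
      linarith
    have hb2 : (0:ℝ) < (1 + ‖κ‖) / Real.sqrt d := by positivity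
    refine (Real.rpow_le_rpow_of_nonpos hb2 hble (by linarith)).trans_eq ?_
    rw [Real.div_rpow (by linarith) hsd.le, Real.rpow_neg hsd.le]
    field_simp
  calc ‖ftd g κ‖ ≤ c ^ d * (1 + ‖κ‖ / Real.sqrt d) ^ (-e) := step1.trans step2.le
    _ ≤ c ^ d * (Real.sqrt d ^ e * (1 + ‖κ‖) ^ (-e)) :=
        mul_le_mul_of_nonneg_left step3 (by positivity)
    _ = (c ^ d * Real.sqrt d ^ e) * (1 + ‖κ‖) ^ (-e) := by ring

end PartOne

section PartTwoPrep
variable {d : ℕ} {f : ℝ → ℂ} {c p : ℝ}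

noncomputable def Hsup {d : ℕ} (g : EuclideanSpace ℝ (Fin d) → ℂ) (r : ℝ)
    (k : EuclideanSpace ℝ (Fin d)) : ℝ :=
  ⨆ s ∈ Metric.ball (0 : EuclideanSpace ℝ (Fin d)) 1, ‖ftd g (r • (k + s))‖ ^ 2

lemma smul_add_coord (r : ℝ) (k s : EuclideanSpace ℝ (Fin d)) (i : Fin d) :
    (r • (k + s)) i = r * (k i + s i) := rfl

lemma ftd_sq_eq {g : EuclideanSpace ℝ (Fin d) → ℂ}
    (hprod : ∀ κ, ftd g κ = ∏ i : Fin d, ft1 f (κ i)) (κ : EuclideanSpace ℝ (Fin d)) :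
    ‖ftd g κ‖ ^ 2 = ∏ i : Fin d, ‖ft1 f (κ i)‖ ^ 2 := by
  rw [hprod, norm_prod, ← Finset.prod_pow]

lemma Hsup_nonneg (g : EuclideanSpace ℝ (Fin d) → ℂ) (r k) : 0 ≤ Hsup g r k := by
  unfold Hsup
  exact biSup_nonneg' fun s _ => sq_nonneg _

lemma Hsup_le_prod_hstar {g : EuclideanSpace ℝ (Fin d) → ℂ}
    (hprod : ∀ κ, ftd g κ = ∏ i : Fin d, ft1 f (κ i)) (r : ℝ) (k : EuclideanSpace ℝ (Fin d)) :
    Hsup g r k ≤ ∏ i : Fin d, hstar f r (k i) := by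
  unfold Hsup
  refine biSup_le' (F := fun s => ‖ftd g (r • (k + s))‖ ^ 2)
    (Finset.prod_nonneg fun i _ => hstar_nonneg _ _) ?_
  intro s hs
  dsimp only
  rw [ftd_sq_eq hprod]
  refine Finset.prod_le_prod (fun i _ => sq_nonneg _) fun i _ => ?_
  rw [smul_add_coord]
  refine le_hstar ?_ r (k i)
  rw [mem_ball_zero_iff] at hs
  exact lt_of_le_of_lt (abs_coord_le s i) hs

lemma Hsup_le_D (hd : 0 < d)
    (hdec : ∀ k, ‖ft1 f k‖ ≤ c * (1+|k|) ^ (-((1+p)/2))) (hc : 0 ≤ c) (hp : -1 ≤ p)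
    {g : EuclideanSpace ℝ (Fin d) → ℂ}
    (hprod : ∀ κ, ftd g κ = ∏ i : Fin d, ft1 f (κ i)) {r : ℝ} (hr : 0 ≤ r)
    {k : EuclideanSpace ℝ (Fin d)} (hk : 2 ≤ ‖k‖) :
    Hsup g r k ≤ ((∫ x, ‖f x‖)^2) ^ (d-1) * (c^2 * (1 + r / Real.sqrt d) ^ (-(1+p))) := by
  have hsd := sqrt_d_pos hd
  have hBpos : (0:ℝ) ≤ ((∫ x, ‖f x‖)^2) ^ (d-1) * (c^2 * (1 + r / Real.sqrt d) ^ (-(1+p))) := by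
    have := Msq_nonneg (f := f)
    positivity
  unfold Hsup
  refine biSup_le' (F := fun s => ‖ftd g (r • (k + s))‖ ^ 2) hBpos ?_
  intro s hs
  rw [mem_ball_zero_iff] at hs
  have hks : 1 ≤ ‖k + s‖ := by
    have := norm_add_le (k + s) (-s)
    simp only [add_neg_cancel_right, norm_neg] at this
    linarith
  obtain ⟨i₀, hi₀⟩ := exists_coord_big hd (k + s)
  have hcoord : 1 / Real.sqrt d ≤ |(k + s) i₀| := by
    rw [div_le_iff₀ hsd]
    calc (1:ℝ) ≤ ‖k + s‖ := hks
      _ ≤ Real.sqrt d * |(k+s) i₀| := hi₀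
      _ = |(k+s) i₀| * Real.sqrt d := by ring
  rw [ftd_sq_eq hprod, ← Finset.mul_prod_erase Finset.univ _ (Finset.mem_univ i₀)]
  have h1 : ‖ft1 f ((r • (k + s)) i₀)‖ ^ 2 ≤ c^2 * (1 + r / Real.sqrt d) ^ (-(1+p)) := by
    refine (sq_decay hdec hc _).trans ?_
    refine mul_le_mul_of_nonneg_left ?_ (by positivity)
    refine Real.rpow_le_rpow_of_nonpos (by positivity) ?_ (by linarith)
    rw [smul_add_coord, abs_mul, abs_of_nonneg hr]
    have : r * (1 / Real.sqrt d) ≤ r * |k i₀ + s i₀| := by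
      exact mul_le_mul_of_nonneg_left hcoord hr
    have e1 : r / Real.sqrt d = r * (1 / Real.sqrt d) := by ring
    linarith [e1 ▸ this]
  have h2 : ∏ i ∈ Finset.univ.erase i₀, ‖ft1 f ((r • (k + s)) i)‖ ^ 2
      ≤ ((∫ x, ‖f x‖)^2) ^ (d-1) := by
    calc ∏ i ∈ Finset.univ.erase i₀, ‖ft1 f ((r • (k + s)) i)‖ ^ 2
        ≤ ∏ _i ∈ Finset.univ.erase i₀, (∫ x, ‖f x‖)^2 :=
          Finset.prod_le_prod (fun i _ => sq_nonneg _) (fun i _ => sq_norm_ft1_le _)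
      _ = ((∫ x, ‖f x‖)^2) ^ (d-1) := by
          rw [Finset.prod_const, Finset.card_erase_of_mem (Finset.mem_univ i₀),
            Finset.card_univ, Fintype.card_fin]
  calc ‖ft1 f ((r • (k + s)) i₀)‖ ^ 2 * ∏ i ∈ Finset.univ.erase i₀, ‖ft1 f ((r • (k + s)) i)‖ ^ 2
      ≤ (c^2 * (1 + r / Real.sqrt d) ^ (-(1+p))) * (((∫ x, ‖f x‖)^2) ^ (d-1)) := by
        refine mul_le_mul h1 h2 (Finset.prod_nonneg fun i _ => sq_nonneg _) (by positivity)
    _ = ((∫ x, ‖f x‖)^2) ^ (d-1) * (c^2 * (1 + r / Real.sqrt d) ^ (-(1+p))) := by ring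

end PartTwoPrep

section MainCase
variable {d : ℕ} {f : ℝ → ℂ} {c p : ℝ}

lemma compl_tail_eq : {k : ℝ | 2 ≤ |k|}ᶜ = Ioo (-2) 2 := by
  ext k
  simp only [mem_compl_iff, mem_setOf_eq, not_le, mem_Ioo, abs_lt]

lemma E_measurableSet : MeasurableSet {k : EuclideanSpace ℝ (Fin d) | 2 ≤ ‖k‖} :=
  measurableSet_le measurable_const measurable_norm

lemma hstar_integrable_full (hfint : Integrable f) {r : ℝ}
    (hint : IntegrableOn (hstar f r) {k : ℝ | 2 ≤ |k|}) :
    Integrable (hstar f r) := by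
  have hcompl : IntegrableOn (hstar f r) {k : ℝ | 2 ≤ |k|}ᶜ := by
    rw [compl_tail_eq]
    refine Integrable.mono' (g := fun _ => (∫ x, ‖f x‖)^2)
      (integrableOn_const ?_)
      ((hstar_measurable hfint r).aestronglyMeasurable) ?_
    · rw [Real.volume_Ioo]; exact ENNReal.ofReal_ne_top
    · filter_upwards with k
      rw [Real.norm_eq_abs, abs_of_nonneg (hstar_nonneg _ _)]
      exact hstar_le_Msq _ _
  have := hint.union hcompl
  rwa [union_compl_self, integrableOn_univ] at this

lemma integral_hstar_full_le (hfint : Integrable f) {r C₁ : ℝ} (hr : 1 ≤ r) (hp : -1 ≤ p)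
    (hC₁ : 0 < C₁)
    (htr : (∫ k in {k : ℝ | 2 ≤ |k|}, hstar f r k) ≤ C₁ * r ^ (-(1+p)))
    (hint : IntegrableOn (hstar f r) {k : ℝ | 2 ≤ |k|}) :
    (∫ k, hstar f r k) ≤ 4 * (∫ x, ‖f x‖)^2 + C₁ := by
  have hfull := hstar_integrable_full hfint hint
  rw [← integral_add_compl tail_measurableSet hfull]
  have h1 : (∫ k in {k : ℝ | 2 ≤ |k|}, hstar f r k) ≤ C₁ := by
    refine htr.trans ?_
    nth_rewrite 2 [show C₁ = C₁ * 1 by ring]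
    refine mul_le_mul_of_nonneg_left ?_ hC₁.le
    exact Real.rpow_le_one_of_one_le_of_nonpos hr (by linarith)
  have h2 : (∫ k in {k : ℝ | 2 ≤ |k|}ᶜ, hstar f r k) ≤ 4 * (∫ x, ‖f x‖)^2 := by
    have hico : IntegrableOn (hstar f r) {k : ℝ | 2 ≤ |k|}ᶜ := hfull.integrableOn
    calc (∫ k in {k : ℝ | 2 ≤ |k|}ᶜ, hstar f r k)
        ≤ ∫ _k in {k : ℝ | 2 ≤ |k|}ᶜ, (∫ x, ‖f x‖)^2 := by
          refine setIntegral_mono_on hico ?_ tail_measurableSet.compl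
            (fun k _ => hstar_le_Msq _ _)
          rw [compl_tail_eq]
          refine integrableOn_const ?_
          rw [Real.volume_Ioo]; exact ENNReal.ofReal_ne_top
      _ = ((volume {k : ℝ | 2 ≤ |k|}ᶜ).toReal) * (∫ x, ‖f x‖)^2 := by
          rw [setIntegral_const]; rfl
      _ ≤ 4 * (∫ x, ‖f x‖)^2 := by
          refine mul_le_mul_of_nonneg_right ?_ (Msq_nonneg)
          rw [compl_tail_eq, Real.volume_Ioo]
          rw [ENNReal.toReal_ofReal (by norm_num)]
          norm_num
  linarith

end MainCase

section ProdTerm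
variable {d : ℕ} {f : ℝ → ℂ}

noncomputable def psi (f : ℝ → ℂ) (r : ℝ) (j i : Fin d) : ℝ → ℝ :=
  if i = j then Set.indicator {t : ℝ | 2 ≤ |t|} (hstar f r) else hstar f r

lemma psi_nonneg (r : ℝ) (j i : Fin d) (t : ℝ) : 0 ≤ psi f r j i t := by
  unfold psi
  split
  · exact Set.indicator_nonneg (fun x _ => hstar_nonneg _ _) t
  · exact hstar_nonneg _ _

lemma psi_integrable (hfint : Integrable f) {r : ℝ}
    (hint : IntegrableOn (hstar f r) {k : ℝ | 2 ≤ |k|}) (j i : Fin d) :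
    Integrable (psi f r j i) := by
  unfold psi
  split
  · exact (integrable_indicator_iff tail_measurableSet).mpr hint
  · exact hstar_integrable_full hfint hint

lemma psi_integral (r : ℝ) (j i : Fin d) :
    (∫ t, psi f r j i t) =
      if i = j then (∫ k in {k : ℝ | 2 ≤ |k|}, hstar f r k) else ∫ t, hstar f r t := by
  unfold psi
  split
  · rw [integral_indicator tail_measurableSet]
  · rfl

lemma prodTerm_integrable (hfint : Integrable f) {r : ℝ}
    (hint : IntegrableOn (hstar f r) {k : ℝ | 2 ≤ |k|}) (j : Fin d) :
    Integrable (fun k : EuclideanSpace ℝ (Fin d) => ∏ i : Fin d, psi f r j i (k i)) := by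
  have e := MeasurePreserving.symm _ (EuclideanSpace.volume_preserving_symm_measurableEquiv_toLp (Fin d))
  rw [← e.integrable_comp_emb (MeasurableEquiv.measurableEmbedding _)]
  have : ((fun k : EuclideanSpace ℝ (Fin d) => ∏ i : Fin d, psi f r j i (k i)) ∘
      (MeasurableEquiv.toLp 2 (Fin d → ℝ)).symm.symm) =
      fun y : Fin d → ℝ => ∏ i : Fin d, psi f r j i (y i) := rfl
  rw [this]
  exact Integrable.fintype_prod (f := fun i => psi f r j i) (fun i => psi_integrable hfint hint j i)

lemma prodTerm_integral (r : ℝ) (j : Fin d) :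
    (∫ k : EuclideanSpace ℝ (Fin d), ∏ i : Fin d, psi f r j i (k i)) =
      (∫ k in {k : ℝ | 2 ≤ |k|}, hstar f r k) * (∫ t, hstar f r t) ^ (d - 1) := by
  rw [← (MeasurePreserving.symm _
      (EuclideanSpace.volume_preserving_symm_measurableEquiv_toLp (Fin d))).integral_comp
    (MeasurableEquiv.measurableEmbedding _) _]
  have : (fun y : Fin d → ℝ =>
      (fun k : EuclideanSpace ℝ (Fin d) => ∏ i : Fin d, psi f r j i (k i))
        ((MeasurableEquiv.toLp 2 (Fin d → ℝ)).symm.symm y)) =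
      fun y : Fin d → ℝ => ∏ i : Fin d, psi f r j i (y i) := rfl
  rw [show (fun y : Fin d → ℝ =>
      ∏ i : Fin d, psi f r j i (((MeasurableEquiv.toLp 2 (Fin d → ℝ)).symm.symm y) i)) =
      fun y : Fin d → ℝ => ∏ i : Fin d, psi f r j i (y i) from rfl]
  rw [integral_fintype_prod_volume_eq_prod (f := fun i => psi f r j i)]
  rw [← Finset.mul_prod_erase Finset.univ _ (Finset.mem_univ j)]
  rw [psi_integral, if_pos rfl]
  congr 1
  rw [Finset.prod_congr rfl (fun i hi => by
    rw [psi_integral, if_neg (Finset.ne_of_mem_erase hi)]),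
    Finset.prod_const, Finset.card_erase_of_mem (Finset.mem_univ j), Finset.card_univ,
    Fintype.card_fin]

end ProdTerm

section MainEstimate
variable {d : ℕ} {f : ℝ → ℂ} {c p : ℝ}

lemma norm_le_sqrt_d_mul (k : EuclideanSpace ℝ (Fin d)) {a : ℝ} (ha : 0 ≤ a)
    (h : ∀ i, |k i| ≤ a) : ‖k‖ ≤ Real.sqrt d * a := by
  rw [EuclideanSpace.norm_eq]
  have hsum : ∑ i, ‖k i‖^2 ≤ (d:ℝ) * a^2 := by
    calc ∑ i, ‖k i‖^2 ≤ ∑ _i : Fin d, a^2 := Finset.sum_le_sum fun i _ => by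
          rw [Real.norm_eq_abs]; nlinarith [abs_nonneg (k i), h i]
      _ = d * a^2 := by simp [mul_comm]
  refine (Real.sqrt_le_sqrt hsum).trans ?_
  rw [Real.sqrt_mul (by positivity), Real.sqrt_sq ha]

lemma main_case (hd : 0 < d) (hfint : Integrable f)
    (hdec : ∀ k, ‖ft1 f k‖ ≤ c * (1+|k|) ^ (-((1+p)/2))) (hc : 0 < c) (hp : -1 ≤ p)
    {g : EuclideanSpace ℝ (Fin d) → ℂ}
    (hprod : ∀ κ, ftd g κ = ∏ i : Fin d, ft1 f (κ i))
    {r C₁ : ℝ} (hr : 1 ≤ r) (hC₁ : 0 < C₁)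
    (htr : (∫ k in {k : ℝ | 2 ≤ |k|}, hstar f r k) ≤ C₁ * r ^ (-(1+p)))
    (hint : IntegrableOn (hstar f r) {k : ℝ | 2 ≤ |k|}) :
    (∫ k in {k : EuclideanSpace ℝ (Fin d) | 2 ≤ ‖k‖}, Hsup g r k) ≤
      ((d : ℝ) * C₁ * (4 * (∫ x, ‖f x‖)^2 + C₁) ^ (d-1)
        + ((∫ x, ‖f x‖)^2) ^ (d-1) * c^2 * Real.sqrt d ^ (1+p)
          * (volume (Metric.closedBall (0 : EuclideanSpace ℝ (Fin d))
              (2*Real.sqrt d))).toReal)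
        * r ^ (-(1+p)) := by
  have hr0 : (0:ℝ) < r := by linarith
  have hsd := sqrt_d_pos hd
  set q : ℝ := 1 + p with hqdef
  have hq0 : 0 ≤ q := by rw [hqdef]; linarith
  set Msq : ℝ := (∫ x, ‖f x‖)^2 with hMsqdef
  have hMsq0 : 0 ≤ Msq := Msq_nonneg
  set S : ℝ := ∫ t, hstar f r t with hSdef
  set T : ℝ := ∫ k in {k : ℝ | 2 ≤ |k|}, hstar f r k with hTdef
  set B : ℝ := 4 * Msq + C₁ with hBdef
  have hS0 : 0 ≤ S := integral_nonneg fun t => hstar_nonneg _ _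
  have hT0 : 0 ≤ T := setIntegral_nonneg tail_measurableSet fun t _ => hstar_nonneg _ _
  have hSB : S ≤ B := integral_hstar_full_le hfint hr hp hC₁ htr hint
  set R : ℝ := 2 * Real.sqrt d with hRdef
  set D : ℝ := Msq ^ (d-1) * (c^2 * (1 + r / Real.sqrt d) ^ (-q)) with hDdef
  have hD0 : 0 ≤ D := by rw [hDdef]; positivity
  set V : ℝ := (volume (Metric.closedBall (0 : EuclideanSpace ℝ (Fin d)) R)).toReal
    with hVdef
  have hV0 : 0 ≤ V := ENNReal.toReal_nonneg
  set Maj : EuclideanSpace ℝ (Fin d) → ℝ := fun k =>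
    (∑ j : Fin d, ∏ i : Fin d, psi f r j i (k i)) +
      Set.indicator (Metric.closedBall (0 : EuclideanSpace ℝ (Fin d)) R) (fun _ => D) k
    with hMajdef
  have hMajInt : Integrable Maj := by
    refine Integrable.add ?_ ?_
    · exact integrable_finset_sum _ fun j _ => prodTerm_integrable hfint hint j
    · refine (integrable_indicator_iff measurableSet_closedBall).mpr ?_
      exact integrableOn_const measure_closedBall_lt_top.ne
  have hMaj0 : ∀ k, 0 ≤ Maj k := by
    intro k
    refine add_nonneg (Finset.sum_nonneg fun j _ =>
      Finset.prod_nonneg fun i _ => psi_nonneg r j i _) ?_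
    exact Set.indicator_nonneg (fun _ _ => hD0) k
  have hmaj : ∀ k ∈ {k : EuclideanSpace ℝ (Fin d) | 2 ≤ ‖k‖}, Hsup g r k ≤ Maj k := by
    intro k hk
    rw [mem_setOf_eq] at hk
    by_cases hcase : ∃ j : Fin d, 2 ≤ |k j|
    · obtain ⟨j, hj⟩ := hcase
      have h1 : Hsup g r k ≤ ∏ i : Fin d, psi f r j i (k i) := by
        refine (Hsup_le_prod_hstar hprod r k).trans_eq ?_
        refine Finset.prod_congr rfl fun i _ => ?_
        unfold psi
        split
        · rename_i hij
          subst hij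
          rw [Set.indicator_of_mem (by exact hj)]
        · rfl
      refine h1.trans ?_
      rw [hMajdef]
      refine le_add_of_le_of_nonneg ?_ (Set.indicator_nonneg (fun _ _ => hD0) k)
      exact Finset.single_le_sum
        (f := fun j => ∏ i : Fin d, psi f r j i (k i))
        (fun j _ => Finset.prod_nonneg fun i _ => psi_nonneg r j i _) (Finset.mem_univ j)
    · push_neg at hcase
      have hkR : k ∈ Metric.closedBall (0 : EuclideanSpace ℝ (Fin d)) R := by
        rw [Metric.mem_closedBall, dist_zero_right, hRdef]
        refine (norm_le_sqrt_d_mul k (by norm_num) fun i => (hcase i).le).trans_eq ?_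
        ring
      have h1 : Hsup g r k ≤ D := by
        rw [hDdef]
        exact Hsup_le_D hd hdec hc.le hp hprod hr0.le hk
      refine h1.trans ?_
      rw [hMajdef]
      refine le_add_of_nonneg_of_le (Finset.sum_nonneg fun j _ =>
        Finset.prod_nonneg fun i _ => psi_nonneg r j i _) ?_
      rw [Set.indicator_of_mem hkR]
  have step1 : (∫ k in {k : EuclideanSpace ℝ (Fin d) | 2 ≤ ‖k‖}, Hsup g r k) ≤
      ∫ k in {k : EuclideanSpace ℝ (Fin d) | 2 ≤ ‖k‖}, Maj k := by
    refine integral_mono_of_nonneg ?_ (hMajInt.integrableOn) ?_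
    · filter_upwards with k using Hsup_nonneg g r k
    · rw [EventuallyLE, ae_restrict_iff' E_measurableSet]
      filter_upwards with k hk using hmaj k hk
  have step2 : (∫ k in {k : EuclideanSpace ℝ (Fin d) | 2 ≤ ‖k‖}, Maj k) ≤ ∫ k, Maj k :=
    setIntegral_le_integral hMajInt (Filter.Eventually.of_forall hMaj0)
  have step3 : (∫ k, Maj k) = (d : ℝ) * (T * S ^ (d-1)) + D * V := by
    rw [hMajdef]
    rw [integral_add (integrable_finset_sum _ fun j _ => prodTerm_integrable hfint hint j)
      ((integrable_indicator_iff measurableSet_closedBall).mpr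
        (integrableOn_const measure_closedBall_lt_top.ne))]
    congr 1
    · rw [integral_finset_sum _ fun j _ => prodTerm_integrable hfint hint j]
      rw [Finset.sum_congr rfl fun j _ => prodTerm_integral r j]
      rw [Finset.sum_const, Finset.card_univ, Fintype.card_fin, nsmul_eq_mul]
    · rw [integral_indicator_const _ measurableSet_closedBall]
      rw [smul_eq_mul, mul_comm]
      rfl
  have hTle : T ≤ C₁ * r ^ (-q) := htr
  have hrq0 : (0:ℝ) ≤ r ^ (-q) := Real.rpow_nonneg hr0.le _
  have hSpow : S ^ (d-1) ≤ B ^ (d-1) := pow_le_pow_left₀ hS0 hSB _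
  have hDle : D ≤ Msq ^ (d-1) * c^2 * Real.sqrt d ^ q * r ^ (-q) := by
    rw [hDdef]
    have h1 : (1 + r / Real.sqrt d) ^ (-q) ≤ (r / Real.sqrt d) ^ (-q) := by
      refine Real.rpow_le_rpow_of_nonpos (by positivity) (by nlinarith [div_pos hr0 hsd]) (by linarith)
    have h2 : (r / Real.sqrt d) ^ (-q) = Real.sqrt d ^ q * r ^ (-q) := by
      rw [Real.div_rpow hr0.le hsd.le, Real.rpow_neg hsd.le]
      field_simp
    calc Msq ^ (d-1) * (c^2 * (1 + r / Real.sqrt d) ^ (-q))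
        ≤ Msq ^ (d-1) * (c^2 * ((r / Real.sqrt d) ^ (-q))) := by
          refine mul_le_mul_of_nonneg_left (mul_le_mul_of_nonneg_left h1 (by positivity)) (by positivity)
      _ = Msq ^ (d-1) * c^2 * Real.sqrt d ^ q * r ^ (-q) := by rw [h2]; ring
  have hfinal : (d : ℝ) * (T * S ^ (d-1)) + D * V ≤
      ((d : ℝ) * C₁ * B ^ (d-1) + Msq ^ (d-1) * c^2 * Real.sqrt d ^ q * V) * r ^ (-q) := by
    have hd0 : (0:ℝ) ≤ d := Nat.cast_nonneg d
    have hB0 : 0 ≤ B := by rw [hBdef]; positivity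
    have hBpow0 : (0:ℝ) ≤ B ^ (d-1) := pow_nonneg hB0 _
    have e1 : T * S ^ (d-1) ≤ (C₁ * r ^ (-q)) * B ^ (d-1) := by
      refine mul_le_mul hTle hSpow (pow_nonneg hS0 _) (by positivity)
    have e2 : D * V ≤ (Msq ^ (d-1) * c^2 * Real.sqrt d ^ q * V) * r ^ (-q) := by
      calc D * V ≤ (Msq ^ (d-1) * c^2 * Real.sqrt d ^ q * r ^ (-q)) * V :=
            mul_le_mul_of_nonneg_right hDle hV0
        _ = (Msq ^ (d-1) * c^2 * Real.sqrt d ^ q * V) * r ^ (-q) := by ring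
    have e3 : (d:ℝ) * (T * S ^ (d-1)) ≤ (d:ℝ) * ((C₁ * r ^ (-q)) * B ^ (d-1)) :=
      mul_le_mul_of_nonneg_left e1 hd0
    calc (d : ℝ) * (T * S ^ (d-1)) + D * V
        ≤ (d:ℝ) * ((C₁ * r ^ (-q)) * B ^ (d-1)) +
            (Msq ^ (d-1) * c^2 * Real.sqrt d ^ q * V) * r ^ (-q) := add_le_add e3 e2
      _ = ((d : ℝ) * C₁ * B ^ (d-1) + Msq ^ (d-1) * c^2 * Real.sqrt d ^ q * V) * r ^ (-q) := by
          ring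
  calc (∫ k in {k : EuclideanSpace ℝ (Fin d) | 2 ≤ ‖k‖}, Hsup g r k)
      ≤ (d : ℝ) * (T * S ^ (d-1)) + D * V := by
        refine step1.trans (step2.trans_eq step3)
    _ ≤ _ := hfinal

end MainEstimate

section Degenerate
variable {d : ℕ} {f : ℝ → ℂ}

lemma le_Hsup {g : EuclideanSpace ℝ (Fin d) → ℂ}
    (hprod : ∀ κ, ftd g κ = ∏ i : Fin d, ft1 f (κ i)) (r : ℝ)
    (k : EuclideanSpace ℝ (Fin d)) {s : EuclideanSpace ℝ (Fin d)}
    (hs : s ∈ Metric.ball (0 : EuclideanSpace ℝ (Fin d)) 1) :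
    ‖ftd g (r • (k + s))‖ ^ 2 ≤ Hsup g r k := by
  unfold Hsup
  refine le_biSup' (F := fun s => ‖ftd g (r • (k + s))‖ ^ 2)
    (B := ((∫ x, ‖f x‖)^2) ^ d) (by positivity) ?_ hs
  intro s' _
  rw [ftd_sq_eq hprod]
  calc ∏ i : Fin d, ‖ft1 f ((r • (k + s')) i)‖ ^ 2
      ≤ ∏ _i : Fin d, (∫ x, ‖f x‖)^2 :=
        Finset.prod_le_prod (fun i _ => sq_nonneg _) (fun i _ => sq_norm_ft1_le _)
    _ = ((∫ x, ‖f x‖)^2) ^ d := by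
        rw [Finset.prod_const, Finset.card_univ, Fintype.card_fin]

lemma degenerate (hd : 0 < d) (hfint : Integrable f)
    {g : EuclideanSpace ℝ (Fin d) → ℂ}
    (hprod : ∀ κ, ftd g κ = ∏ i : Fin d, ft1 f (κ i))
    {r : ℝ} (hr0 : 0 < r)
    (hnint : ¬ IntegrableOn (hstar f r) {k : ℝ | 2 ≤ |k|}) :
    ¬ IntegrableOn (Hsup g r) {k : EuclideanSpace ℝ (Fin d) | 2 ≤ ‖k‖} := by
  intro K
  by_cases hzero : ∀ t, ft1 f t = 0
  · refine hnint ?_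
    have hz : hstar f r = fun _ => 0 := by
      funext k
      refine le_antisymm ?_ (hstar_nonneg _ _)
      unfold hstar
      refine biSup_le' (F := fun s => ‖ft1 f (r * (k + s))‖ ^ 2) le_rfl fun s _ => ?_
      simp [hzero]
    rw [hz]
    exact (integrable_zero _ _ _).integrableOn
  push_neg at hzero
  obtain ⟨t₀, ht₀⟩ := hzero
  set h : ℝ → ℝ := fun t => ‖ft1 f t‖ ^ 2 with hhdef
  have hcont : Continuous h := by
    have := ft1_continuous hfint
    rw [hhdef]; fun_prop
  have hpos : 0 < h t₀ := by
    rw [hhdef]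
    have : 0 < ‖ft1 f t₀‖ := norm_pos_iff.mpr ht₀
    positivity
  obtain ⟨δ, hδ0, hδ⟩ : ∃ δ > 0, ∀ t, |t - t₀| < δ → h t₀ / 2 < h t := by
    have hU : IsOpen (h ⁻¹' Ioi (h t₀ / 2)) := hcont.isOpen_preimage _ isOpen_Ioi
    have ht₀U : t₀ ∈ h ⁻¹' Ioi (h t₀ / 2) := by
      simp only [mem_preimage, mem_Ioi]; linarith
    obtain ⟨δ, hδ0, hball⟩ := Metric.isOpen_iff.mp hU t₀ ht₀U
    exact ⟨δ, hδ0, fun t ht => hball (by rwa [Metric.mem_ball, Real.dist_eq])⟩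
  obtain ⟨n, rfl⟩ := Nat.exists_eq_succ_of_ne_zero hd.ne'
  set tst : ℝ → ℝ := Set.indicator {t : ℝ | 2 ≤ |t|} (hstar f r) with htstdef
  set φ : Fin (n+1) → ℝ → ℝ :=
    fun i => if i = 0 then tst else fun t => h (r * t) with hφdef
  have hφ0 : φ 0 = tst := by simp [hφdef]
  have hφs : ∀ i : Fin (n+1), i ≠ 0 → φ i = fun t => h (r * t) := by
    intro i hi; simp [hφdef, hi]
  have hφmeas : ∀ i, Measurable (φ i) := by
    intro i
    by_cases hi : i = 0
    · subst hi; rw [hφ0]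
      exact (hstar_measurable hfint r).indicator tail_measurableSet
    · rw [hφs i hi]
      exact (hcont.comp (continuous_const.mul continuous_id)).measurable
  have hφnn : ∀ i t, 0 ≤ φ i t := by
    intro i t
    by_cases hi : i = 0
    · subst hi; rw [hφ0]
      exact Set.indicator_nonneg (fun x _ => hstar_nonneg _ _) t
    · rw [hφs i hi]
      exact sq_nonneg _
  set G : EuclideanSpace ℝ (Fin (n+1)) → ℝ := fun k => ∏ i, φ i (k i) with hGdef
  have hGmeas : Measurable G := by
    rw [hGdef]
    refine Finset.measurable_prod _ fun i _ => ?_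
    exact (hφmeas i).comp
      ((measurable_pi_apply i).comp (MeasurableEquiv.toLp 2 (Fin (n+1) → ℝ)).symm.measurable)
  have hGnn : ∀ k, 0 ≤ G k := fun k => Finset.prod_nonneg fun i _ => hφnn i _
  have hGle : ∀ k, G k ≤
      Set.indicator {k : EuclideanSpace ℝ (Fin (n+1)) | 2 ≤ ‖k‖} (Hsup g r) k := by
    intro k
    by_cases hk0 : 2 ≤ |k 0|
    · have hkE : k ∈ {k : EuclideanSpace ℝ (Fin (n+1)) | 2 ≤ ‖k‖} := by
        rw [mem_setOf_eq]
        exact hk0.trans (abs_coord_le k 0)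
      rw [Set.indicator_of_mem hkE]
      show (∏ i, φ i (k i)) ≤ Hsup g r k
      rw [← Finset.mul_prod_erase Finset.univ (fun i => φ i (k i))
        (Finset.mem_univ (0 : Fin (n+1)))]
      have hφ0' : φ 0 (k 0) = hstar f r (k 0) := by
        rw [hφ0]
        exact Set.indicator_of_mem (by exact hk0) _
      rw [hφ0']
      set a : ℝ := ∏ i ∈ Finset.univ.erase (0 : Fin (n+1)), φ i (k i) with hadef
      have ha0 : 0 ≤ a := Finset.prod_nonneg fun i _ => hφnn i _
      rcases ha0.eq_or_lt with ha | ha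
      · rw [← ha, mul_zero]
        exact Hsup_nonneg g r k
      · have key : hstar f r (k 0) ≤ Hsup g r k / a := by
          unfold hstar
          refine biSup_le' (F := fun σ => ‖ft1 f (r * (k 0 + σ))‖ ^ 2)
            (div_nonneg (Hsup_nonneg g r k) ha0) ?_
          intro σ hσ
          rw [mem_ball_zero_iff, Real.norm_eq_abs] at hσ
          dsimp only
          rw [le_div_iff₀ ha]
          set s : EuclideanSpace ℝ (Fin (n+1)) := EuclideanSpace.single 0 σ with hsdef
          have hsball : s ∈ Metric.ball (0 : EuclideanSpace ℝ (Fin (n+1))) 1 := by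
            rw [mem_ball_zero_iff, hsdef, EuclideanSpace.norm_single, Real.norm_eq_abs]
            exact hσ
          have hprodeq : ‖ft1 f (r * (k 0 + σ))‖ ^ 2 * a = ‖ftd g (r • (k + s))‖ ^ 2 := by
            rw [ftd_sq_eq hprod]
            rw [← Finset.mul_prod_erase Finset.univ
              (fun i => ‖ft1 f ((r • (k + s)) i)‖ ^ 2) (Finset.mem_univ (0 : Fin (n+1)))]
            have e1 : ((r • (k + s)) 0 : ℝ) = r * (k 0 + σ) := by
              rw [smul_add_coord, hsdef, EuclideanSpace.single_apply, if_pos rfl]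
            have e2 : ∏ i ∈ Finset.univ.erase (0 : Fin (n+1)),
                ‖ft1 f ((r • (k + s)) i)‖ ^ 2 = a := by
              rw [hadef]
              refine Finset.prod_congr rfl fun i hi => ?_
              have hi0 : i ≠ 0 := Finset.ne_of_mem_erase hi
              rw [smul_add_coord, hsdef, EuclideanSpace.single_apply, if_neg hi0, add_zero,
                hφs i hi0]
            rw [e1, e2]
          rw [hprodeq]
          exact le_Hsup hprod r k hsball
        calc hstar f r (k 0) * a ≤ (Hsup g r k / a) * a :=
              mul_le_mul_of_nonneg_right key ha0
          _ = Hsup g r k := by field_simp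
    · have hzero : G k = 0 := by
        show (∏ i, φ i (k i)) = 0
        refine Finset.prod_eq_zero (Finset.mem_univ (0 : Fin (n+1))) ?_
        rw [hφ0]
        exact Set.indicator_of_notMem (by exact hk0) _
      rw [hzero]
      exact Set.indicator_nonneg (fun x _ => Hsup_nonneg g r x) k
  have hGint : Integrable G := by
    have hind : Integrable
        (Set.indicator {k : EuclideanSpace ℝ (Fin (n+1)) | 2 ≤ ‖k‖} (Hsup g r)) :=
      (integrable_indicator_iff E_measurableSet).mpr K
    refine hind.mono' hGmeas.aestronglyMeasurable ?_
    filter_upwards with k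
    rw [Real.norm_eq_abs, abs_of_nonneg (hGnn k)]
    exact hGle k
  have hGpi : Integrable (fun y : Fin (n+1) → ℝ => ∏ i, φ i (y i))
      (Measure.pi fun _ => volume) := by
    have e := MeasurePreserving.symm _
      (EuclideanSpace.volume_preserving_symm_measurableEquiv_toLp (Fin (n+1)))
    have h2 := (e.integrable_comp_emb (MeasurableEquiv.measurableEmbedding _)).mpr hGint
    have heq : (G ∘ (MeasurableEquiv.toLp 2 (Fin (n+1) → ℝ)).symm.symm) =
        fun y : Fin (n+1) → ℝ => ∏ i, φ i (y i) := rfl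
    rwa [heq] at h2
  have hsplit : Integrable
      (fun z : ℝ × (Fin n → ℝ) => φ 0 z.1 * ∏ i : Fin n, φ i.succ (z.2 i))
      ((volume : Measure ℝ).prod (Measure.pi fun _ => volume)) := by
    have m := (measurePreserving_piFinSuccAbove (fun _ : Fin (n+1) => (volume : Measure ℝ)) 0).symm
    have h2 := (m.integrable_comp_emb (MeasurableEquiv.measurableEmbedding _)).mpr hGpi
    have heq : ((fun y : Fin (n+1) → ℝ => ∏ i, φ i (y i)) ∘
        (MeasurableEquiv.piFinSuccAbove (fun _ : Fin (n+1) => ℝ) 0).symm) =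
        fun z : ℝ × (Fin n → ℝ) => φ 0 z.1 * ∏ i : Fin n, φ i.succ (z.2 i) := by
      funext z
      simp only [Function.comp_apply, MeasurableEquiv.piFinSuccAbove_symm_apply,
        Fin.insertNthEquiv, Equiv.coe_fn_mk, Fin.insertNth_zero]
      rw [Fin.prod_univ_succ]
      simp only [Fin.cons_zero, Fin.cons_succ, Fin.zero_succAbove, cast_eq]
    rwa [heq] at h2
  have hae := ((integrable_prod_iff' hsplit.aestronglyMeasurable).mp hsplit).1
  set Q : Set (Fin n → ℝ) := Set.univ.pi fun _ => Ioo ((t₀-δ)/r) ((t₀+δ)/r) with hQdef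
  have hQpos : (Measure.pi fun _ : Fin n => (volume : Measure ℝ)) Q ≠ 0 := by
    rw [hQdef, Measure.pi_pi]
    refine Finset.prod_ne_zero_iff.mpr fun i _ => ?_
    rw [Real.volume_Ioo]
    refine (ENNReal.ofReal_pos.mpr ?_).ne'
    rw [div_sub_div_same]
    have e1 : t₀ + δ - (t₀ - δ) = 2 * δ := by ring
    rw [e1]
    positivity
  obtain ⟨y, hyQ, hy⟩ := Measure.exists_mem_of_measure_ne_zero_of_ae hQpos
    (ae_restrict_of_ae hae)
  have hA : 0 < ∏ i : Fin n, φ i.succ (y i) := by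
    refine Finset.prod_pos fun i _ => ?_
    rw [hφs i.succ (Fin.succ_ne_zero i)]
    have hyi := hyQ i (Set.mem_univ i)
    rw [mem_Ioo] at hyi
    refine lt_trans (by linarith) (hδ (r * y i) ?_)
    rw [abs_lt]
    constructor
    · have := (div_lt_iff₀ hr0).mp hyi.1
      linarith
    · have := (lt_div_iff₀ hr0).mp hyi.2
      linarith
  refine hnint ?_
  have htstint : Integrable tst := by
    have h1 := hy.mul_const (∏ i : Fin n, φ i.succ (y i))⁻¹
    refine h1.congr (Filter.Eventually.of_forall fun x => ?_)
    show φ 0 x * (∏ i : Fin n, φ i.succ (y i)) * (∏ i : Fin n, φ i.succ (y i))⁻¹ = tst x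
    rw [mul_assoc, mul_inv_cancel₀ hA.ne', mul_one, hφ0]
  rw [htstdef] at htstint
  exact (integrable_indicator_iff tail_measurableSet).mp htstint

end Degenerate

end Aux

open Metric Set in
/-- If `f ∈ L¹(ℝ, ℂ)` is Fourier-smooth with exponent `p ∈ [-1, ∞)` and
`g(x) = ∏_{j=1}^d f(x_j)`, then `g` is Fourier-smooth with exponent `p - (d - 1)`. -/
theorem stmt11 {d : ℕ} (hd : 0 < d) (f : ℝ → ℂ) (p : ℝ) (hp : -1 ≤ p)
    (hf : FourierSmooth1 f p) (g : EuclideanSpace ℝ (Fin d) → ℂ)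
    (hg : ∀ x, g x = ∏ j : Fin d, f (x j)) :
    FourierSmoothD g (p - ((d : ℝ) - 1)) := by
  obtain ⟨hfint, ⟨c, hc, hdec⟩, htail1⟩ := hf
  have hprod : ∀ κ, ftd g κ = ∏ i : Fin d, ft1 f (κ i) := ftd_eq_prod hfint hg
  refine ⟨integrable_g hfint hg, ⟨c ^ d * Real.sqrt d ^ ((1+p)/2), ?_, fun κ => ?_⟩, ?_⟩
  · have := sqrt_d_pos hd
    positivity
  · have hexp : -(((d : ℝ) + (p - ((d : ℝ) - 1))) / 2) = -((1+p)/2) := by ring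
    rw [hexp]
    exact part_one hd hdec hc hp hprod κ
  · intro hple
    have key : ∃ C₁ > (0:ℝ), ∀ᶠ r : ℝ in atTop,
        (∫ k in {k : ℝ | 2 ≤ |k|}, hstar f r k) ≤ C₁ * r ^ (-(1+p)) := by
      rcases le_or_gt p 0 with hp0 | hp0
      · obtain ⟨C, hC, hev⟩ := htail1 hp0
        exact ⟨C, hC, hev⟩
      · obtain ⟨C, hC, hall⟩ := tail_bound_pos hfint hdec hc.le hp0
        exact ⟨C, hC, (eventually_ge_atTop 1).mono fun r hr => (hall r hr).2⟩
    obtain ⟨C₁, hC₁, hev⟩ := key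
    set Msq : ℝ := (∫ x, ‖f x‖)^2 with hMsqdef
    have hMsq0 : (0:ℝ) ≤ Msq := sq_nonneg _
    set C₂ : ℝ := (d : ℝ) * C₁ * (4 * Msq + C₁) ^ (d-1)
        + Msq ^ (d-1) * c^2 * Real.sqrt d ^ (1+p)
          * (volume (Metric.closedBall (0 : EuclideanSpace ℝ (Fin d))
              (2*Real.sqrt d))).toReal with hC₂def
    have hC₂ : 0 < C₂ := by
      rw [hC₂def]
      have h1 : (0:ℝ) < (d : ℝ) := by exact_mod_cast hd
      have h2 : (0:ℝ) < (4 * Msq + C₁) ^ (d-1) := pow_pos (by linarith) _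
      have h3 : (0:ℝ) ≤ Msq ^ (d-1) * c^2 * Real.sqrt d ^ (1+p)
          * (volume (Metric.closedBall (0 : EuclideanSpace ℝ (Fin d))
              (2*Real.sqrt d))).toReal := by
        have := sqrt_d_pos hd
        have := ENNReal.toReal_nonneg (a := volume (Metric.closedBall
          (0 : EuclideanSpace ℝ (Fin d)) (2*Real.sqrt d)))
        positivity
      have h4 : (0:ℝ) < (d : ℝ) * C₁ * (4 * Msq + C₁) ^ (d-1) :=
        mul_pos (mul_pos h1 hC₁) h2
      linarith
    refine ⟨C₂, hC₂, ?_⟩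
    filter_upwards [hev, eventually_ge_atTop (1:ℝ)] with r htr hr1
    have hexp : -((d : ℝ) + (p - ((d : ℝ) - 1))) = -(1+p) := by ring
    rw [hexp]
    by_cases hint : IntegrableOn (hstar f r) {k : ℝ | 2 ≤ |k|}
    · exact main_case hd hfint hdec hc hp hprod hr1 hC₁ htr hint
    · have hno := degenerate hd hfint hprod (by linarith : (0:ℝ) < r) hint
      have hzero : (∫ k in {k : EuclideanSpace ℝ (Fin d) | 2 ≤ ‖k‖}, Hsup g r k) = 0 :=
        integral_undef hno
      have : (0:ℝ) ≤ C₂ * r ^ (-(1+p)) :=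
        mul_nonneg hC₂.le (Real.rpow_nonneg (by linarith) _)
      exact hzero.trans_le this
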